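/- Let d ≥ 1, C ≥ 0, ρ > 0, and let c : (Fin d →₀ ℕ) → ℂ satisfy |c ν| ≤ C·ρ^{|ν|}·(|ν|)! for every multi-index ν. Then for every a with 0 < a < 1 there exists K(a,d) ≥ 0, depending only on a and d, such that for every z ∈ ℂ^d with |z i| ≤ a/(ρ·d) for all i, the family (|c ν|/ν!)·∏_i |z i|^{ν i}, indexed by multi-indices ν, is summable with sum at most C·K(a,d). -/

import Mathlib

/-- The factorial `ν! = ∏ᵢ (νᵢ)!` of a multi-index. -/
def mfactorial {d : ℕ} (ν : Fin d →₀ ℕ) : ℕ := ∏ i, Nat.factorial (ν i)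

lemma hasSum_pi_geom (d : ℕ) (a : ℝ) (ha : 0 ≤ a) (ha1 : a < 1) :
    HasSum (fun f : Fin d → ℕ => ∏ i, a ^ f i) ((1 - a)⁻¹ ^ d) := by
  induction d with
  | zero =>
      have : (fun f : Fin 0 → ℕ => ∏ i, a ^ f i) = fun _ => (1 : ℝ) := by
        funext f; simp
      rw [this, pow_zero]
      simpa using hasSum_fintype (fun _ : Fin 0 → ℕ => (1 : ℝ))
  | succ n ih =>
      have hgeom : HasSum (fun k : ℕ => a ^ k) (1 - a)⁻¹ :=
        hasSum_geometric_of_lt_one ha ha1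
      have hsummable : Summable fun x : ℕ × (Fin n → ℕ) =>
          a ^ x.1 * ∏ i, a ^ x.2 i :=
        by
          apply Summable.mul_of_nonneg hgeom.summable ih.summable
          · intro k; positivity
          · intro f; positivity
      have hmul := HasSum.mul hgeom ih hsummable
      rw [pow_succ, mul_comm]
      have heq : (fun f : Fin (n + 1) → ℕ => ∏ i, a ^ f i) ∘ (Fin.consEquiv (fun _ : Fin (n + 1) => ℕ))
          = fun x : ℕ × (Fin n → ℕ) => a ^ x.1 * ∏ i, a ^ x.2 i := by
        funext x
        simp [Fin.prod_univ_succ, Fin.consEquiv]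
      rw [← heq] at hmul
      exact (Equiv.hasSum_iff (Fin.consEquiv (fun _ : Fin (n + 1) => ℕ))).mp hmul

lemma factorial_sum_le {d : ℕ} (ν : Fin d →₀ ℕ) :
    (Nat.factorial (∑ i, ν i)) ≤ d ^ (∑ i, ν i) * mfactorial ν := by
  classical
  set n := ∑ i, ν i with hn
  have hspec : (∏ i, Nat.factorial (ν i)) * Nat.multinomial Finset.univ ν
      = Nat.factorial n := Nat.multinomial_spec _ _
  have hmem : (ν : Fin d → ℕ) ∈ Finset.piAntidiag Finset.univ n := by
    rw [Finset.mem_piAntidiag]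
    exact ⟨rfl, fun i _ => Finset.mem_univ i⟩
  have hle : Nat.multinomial Finset.univ ν ≤ d ^ n := by
    have hpow := Finset.sum_pow_eq_sum_piAntidiag (Finset.univ : Finset (Fin d))
      (fun _ => (1 : ℕ)) n
    simp only [Finset.sum_const, Finset.card_univ, Fintype.card_fin, smul_eq_mul,
      mul_one, one_pow, Finset.prod_const_one] at hpow
    calc Nat.multinomial Finset.univ ν
        ≤ ∑ k ∈ Finset.piAntidiag Finset.univ n, Nat.multinomial Finset.univ k :=
          Finset.single_le_sum (fun k _ => Nat.zero_le _) hmem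
      _ = d ^ n := hpow.symm
  calc Nat.factorial n = (∏ i, Nat.factorial (ν i)) * Nat.multinomial Finset.univ ν :=
        hspec.symm
    _ ≤ (∏ i, Nat.factorial (ν i)) * d ^ n := by
        exact Nat.mul_le_mul_left _ hle
    _ = d ^ n * mfactorial ν := by rw [mfactorial, mul_comm]

/-- Taylor coefficients with controlled growth give an absolutely convergent Taylor series
on a polydisk, with a bound depending only on `a` and `d`. -/
theorem taylor_series_summable_on_polydisk
    (d : ℕ) (hd : 1 ≤ d) : ∀ a : ℝ, 0 < a → a < 1 →
    ∃ K : ℝ, 0 ≤ K ∧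
      ∀ C : ℝ, 0 ≤ C → ∀ ρ : ℝ, 0 < ρ →
      ∀ c : (Fin d →₀ ℕ) → ℂ,
        (∀ ν : Fin d →₀ ℕ, ‖c ν‖ ≤
          C * ρ ^ (∑ i, ν i) * (Nat.factorial (∑ i, ν i))) →
      ∀ z : Fin d → ℂ, (∀ i, ‖z i‖ ≤ a / (ρ * d)) →
        Summable (fun ν : Fin d →₀ ℕ =>
          (‖c ν‖ / (mfactorial ν : ℝ)) * ∏ i, ‖z i‖ ^ (ν i)) ∧
        (∑' ν : Fin d →₀ ℕ,
          (‖c ν‖ / (mfactorial ν : ℝ)) * ∏ i, ‖z i‖ ^ (ν i))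
          ≤ C * K := by
  intro a ha ha1
  refine ⟨(1 - a)⁻¹ ^ d, pow_nonneg (inv_nonneg.mpr (by linarith)) d, ?_⟩
  intro C hC ρ hρ c hc z hz
  have hd0 : (0 : ℝ) < d := by exact_mod_cast hd
  -- summability of the majorant over Finsupp
  have hmaj' : HasSum (fun f : Fin d → ℕ => ∏ i, a ^ f i) ((1 - a)⁻¹ ^ d) :=
    hasSum_pi_geom d a ha.le ha1
  have hmaj : HasSum (fun ν : Fin d →₀ ℕ => C * ∏ i, a ^ ν i) (C * (1 - a)⁻¹ ^ d) := by
    have h0 : HasSum ((fun f : Fin d → ℕ => ∏ i, a ^ f i) ∘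
        (Finsupp.equivFunOnFinite (α := Fin d) (M := ℕ))) ((1 - a)⁻¹ ^ d) :=
      (Equiv.hasSum_iff _).mpr hmaj'
    exact h0.mul_left C
  -- termwise bound
  have hbound : ∀ ν : Fin d →₀ ℕ,
      (‖c ν‖ / (mfactorial ν : ℝ)) * ∏ i, ‖z i‖ ^ (ν i)
        ≤ C * ∏ i, a ^ ν i := by
    intro ν
    set n := ∑ i, ν i with hn
    have hmf : (0 : ℝ) < (mfactorial ν : ℝ) := by
      exact_mod_cast Nat.pos_of_ne_zero (by
        simp [mfactorial, Finset.prod_eq_zero_iff, Nat.factorial_ne_zero])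
    have hzr : (0 : ℝ) ≤ a / (ρ * d) := by positivity
    have hprod : ∏ i, ‖z i‖ ^ (ν i) ≤ (a / (ρ * d)) ^ n := by
      rw [← Finset.prod_pow_eq_pow_sum]
      exact Finset.prod_le_prod (fun i _ => pow_nonneg (norm_nonneg _) _)
        (fun i _ => pow_le_pow_left₀ (norm_nonneg _) (hz i) _)
    have h1 : (‖c ν‖) * ∏ i, ‖z i‖ ^ (ν i)
        ≤ (C * ρ ^ n * (Nat.factorial n)) * (a / (ρ * d)) ^ n :=
      mul_le_mul (hc ν) hprod
        (Finset.prod_nonneg fun i _ => pow_nonneg (norm_nonneg _) _)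
        (by positivity)
    have h2 : (C * ρ ^ n * (Nat.factorial n)) * (a / (ρ * d)) ^ n
        ≤ C * (∏ i, a ^ ν i) * (mfactorial ν : ℝ) := by
      have hfle : ((Nat.factorial n : ℝ)) ≤ (d : ℝ) ^ n * (mfactorial ν : ℝ) := by
        exact_mod_cast factorial_sum_le ν
      have hprodpow : (∏ i, a ^ ν i) = a ^ n := Finset.prod_pow_eq_pow_sum _ _ _
      rw [hprodpow, div_pow, mul_pow]
      have key : C * ρ ^ n * ↑(Nat.factorial n) * a ^ n
          ≤ C * a ^ n * ↑(mfactorial ν) * (ρ ^ n * (d:ℝ) ^ n) := by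
        calc C * ρ ^ n * ↑(Nat.factorial n) * a ^ n
            ≤ C * ρ ^ n * ((d : ℝ) ^ n * ↑(mfactorial ν)) * a ^ n := by
              apply mul_le_mul_of_nonneg_right _ (pow_nonneg ha.le n)
              exact mul_le_mul_of_nonneg_left hfle (by positivity)
          _ = C * a ^ n * ↑(mfactorial ν) * (ρ ^ n * (d:ℝ) ^ n) := by ring
      calc C * ρ ^ n * ↑(Nat.factorial n) * (a ^ n / (ρ ^ n * ↑d ^ n))
          = (C * ρ ^ n * ↑(Nat.factorial n) * a ^ n) / (ρ ^ n * ↑d ^ n) := by ring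
        _ ≤ C * a ^ n * ↑(mfactorial ν) := by
            rw [div_le_iff₀ (by positivity)]; exact key
    rw [div_mul_eq_mul_div, div_le_iff₀ hmf]
    calc (‖c ν‖) * ∏ i, ‖z i‖ ^ (ν i)
        ≤ (C * ρ ^ n * (Nat.factorial n)) * (a / (ρ * d)) ^ n := h1
      _ ≤ C * (∏ i, a ^ ν i) * (mfactorial ν : ℝ) := h2
  have hnonneg : ∀ ν : Fin d →₀ ℕ,
      0 ≤ (‖c ν‖ / (mfactorial ν : ℝ)) * ∏ i, ‖z i‖ ^ (ν i) := by
    intro ν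
    apply mul_nonneg (div_nonneg (norm_nonneg _) (Nat.cast_nonneg _))
    exact Finset.prod_nonneg fun i _ => pow_nonneg (norm_nonneg _) _
  have hsum : Summable (fun ν : Fin d →₀ ℕ =>
      (‖c ν‖ / (mfactorial ν : ℝ)) * ∏ i, ‖z i‖ ^ (ν i)) :=
    Summable.of_nonneg_of_le hnonneg hbound hmaj.summable
  refine ⟨hsum, ?_⟩
  calc (∑' ν : Fin d →₀ ℕ,
        (‖c ν‖ / (mfactorial ν : ℝ)) * ∏ i, ‖z i‖ ^ (ν i))
      ≤ ∑' ν : Fin d →₀ ℕ, C * ∏ i, a ^ ν i :=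
        Summable.tsum_le_tsum hbound hsum hmaj.summable
    _ = C * (1 - a)⁻¹ ^ d := hmaj.tsum_eq
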